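/- Suppose ψ, ψ_1, …, ψ_Ñ : [0, T̃] → ℋ are differentiable curves satisfying the Schrödinger equations i dψ/dt = H_D(t) ψ(t) and i dψ_k/dt = (E P_k + H_D(t)) ψ_k(t) for each k, with common initial condition ψ(0) = ψ_k(0) = w_I for a unit vector w_I ∈ ℋ. Then ∑_{k=1}^{Ñ} ‖ψ_k(T̃) − ψ(T̃)‖² ≤ 2E√Ñ T̃. -/

import Mathlib

open scoped BigOperators
noncomputable section

local notation "⟪" x ", " y "⟫" => @inner ℂ _ _ x y

lemma norm_conserved_aux {F : Type*} [NormedAddCommGroup F] [InnerProductSpace ℂ F]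
    [CompleteSpace F] {T : ℝ} (φ : ℝ → F) (A : ℝ → (F →L[ℂ] F))
    (hA : ∀ t ∈ Set.Icc (0:ℝ) T, IsSelfAdjoint (A t))
    (hφ : ∀ t ∈ Set.Icc (0:ℝ) T, HasDerivAt φ ((-Complex.I) • A t (φ t)) t)
    {t : ℝ} (ht : t ∈ Set.Icc (0:ℝ) T) : ‖φ t‖ = ‖φ 0‖ := by
  have h0 : (0:ℝ) ∈ Set.Icc (0:ℝ) T := ⟨le_rfl, ht.1.trans ht.2⟩
  have key : ∀ s ∈ Set.Icc (0:ℝ) T,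
      HasDerivWithinAt (fun u => ⟪φ u, φ u⟫) 0 (Set.Icc (0:ℝ) T) s := by
    intro s hs
    have hd := HasDerivWithinAt.inner ℂ
      ((hφ s hs).hasDerivWithinAt (s := Set.Icc (0:ℝ) T))
      ((hφ s hs).hasDerivWithinAt (s := Set.Icc (0:ℝ) T))
    convert hd using 1
    · rfl
    have hsym := (hA s hs).isSymmetric.apply_clm (φ s) (φ s)
    rw [inner_smul_right, inner_smul_left, hsym]
    simp only [map_neg, Complex.conj_I]
    ring
  have hb : ∀ s ∈ Set.Icc (0:ℝ) T, ‖(0 : ℂ)‖ ≤ 0 := fun s _ => by simp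
  have hm := Convex.norm_image_sub_le_of_norm_hasDerivWithin_le key hb
      (convex_Icc (0:ℝ) T) h0 ht
  have heq : ⟪φ t, φ t⟫ = ⟪φ 0, φ 0⟫ := by
    have h1 : ‖⟪φ t, φ t⟫ - ⟪φ 0, φ 0⟫‖ ≤ 0 := by simpa using hm
    exact sub_eq_zero.mp (norm_le_zero_iff.mp h1)
  rw [inner_self_eq_norm_sq_to_K, inner_self_eq_norm_sq_to_K] at heq
  have heq' : ‖φ t‖ ^ 2 = ‖φ 0‖ ^ 2 := by exact_mod_cast heq
  nlinarith [norm_nonneg (φ t), norm_nonneg (φ 0), heq']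

lemma proj_formula {F : Type*} [NormedAddCommGroup F] [InnerProductSpace ℂ F]
    [FiniteDimensional ℂ F] {ι : Type*} [Fintype ι] (v : ι → F) (hv : Orthonormal ℂ v)
    (K : Submodule ℂ F) (hK : K = Submodule.span ℂ (Set.range v)) (x : F) :
    (K.subtypeL.comp K.orthogonalProjectionOnto) x = ∑ i, ⟪v i, x⟫ • v i := by
  subst hK
  have hmem : (∑ i, ⟪v i, x⟫ • v i) ∈ Submodule.span ℂ (Set.range v) :=
    Submodule.sum_mem _ fun i _ =>
      Submodule.smul_mem _ _ (Submodule.subset_span ⟨i, rfl⟩)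
  have hzero : ∀ z ∈ Submodule.span ℂ (Set.range v),
      ⟪x - ∑ i, ⟪v i, x⟫ • v i, z⟫ = 0 := by
    intro z hz
    induction hz using Submodule.span_induction with
    | mem z hzr =>
      obtain ⟨i₀, rfl⟩ := hzr
      rw [inner_sub_left, hv.inner_left_fintype, inner_conj_symm, sub_self]
    | zero => exact inner_zero_right _
    | add a b _ _ ha hb => rw [inner_add_right, ha, hb, add_zero]
    | smul c a _ ha => rw [inner_smul_right, ha, mul_zero]
  exact Submodule.eq_starProjection_of_mem_of_inner_eq_zero hmem hzero

lemma norm_sq_sum_smul {F : Type*} [NormedAddCommGroup F] [InnerProductSpace ℂ F]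
    {ι : Type*} [Fintype ι] (v : ι → F) (hv : Orthonormal ℂ v) (c : ι → ℂ) :
    ‖∑ i, c i • v i‖ ^ 2 = ∑ i, ‖c i‖ ^ 2 := by
  have h := hv.inner_sum c c Finset.univ
  rw [inner_self_eq_norm_sq_to_K] at h
  have hc : ∑ i, (starRingEnd ℂ) (c i) * c i = ((∑ i, ‖c i‖ ^ 2 : ℝ) : ℂ) := by
    push_cast
    refine Finset.sum_congr rfl fun i _ => ?_
    rw [Complex.conj_mul']
  rw [hc] at h
  simpa [← Complex.ofReal_pow] using congrArg Complex.re h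

/-- under the driven Schrödinger dynamics, the accumulated deviation satisfies
`∑_k ‖ψ_k(T̃) − ψ(T̃)‖² ≤ 2E√Ñ T̃`. -/
theorem upper_bound_sum_dist_sq_of_schrodinger
    (Nt ℓ : ℕ) (hNt : 1 ≤ Nt) (hℓ : 1 ≤ ℓ)
    (w : Fin Nt × Fin ℓ → EuclideanSpace ℂ (Fin (Nt * ℓ)))
    (hw : Orthonormal ℂ w)
    (hspan : Submodule.span ℂ (Set.range w) = ⊤)
    (L : Fin Nt → Submodule ℂ (EuclideanSpace ℂ (Fin (Nt * ℓ))))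
    (hL : ∀ k, L k = Submodule.span ℂ (Set.range fun i : Fin ℓ => w (k, i)))
    (P : Fin Nt → (EuclideanSpace ℂ (Fin (Nt * ℓ)) →L[ℂ] EuclideanSpace ℂ (Fin (Nt * ℓ))))
    (hP : ∀ k, P k = (L k).subtypeL.comp (L k).orthogonalProjectionOnto)
    (E T : ℝ) (hE : 0 < E) (hT : 0 < T)
    (HD : ℝ → (EuclideanSpace ℂ (Fin (Nt * ℓ)) →L[ℂ] EuclideanSpace ℂ (Fin (Nt * ℓ))))
    (hHDcont : ContinuousOn HD (Set.Icc 0 T))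
    (hHDsa : ∀ t ∈ Set.Icc (0 : ℝ) T, IsSelfAdjoint (HD t))
    (wI : EuclideanSpace ℂ (Fin (Nt * ℓ))) (hwI : ‖wI‖ = 1)
    (ψ : ℝ → EuclideanSpace ℂ (Fin (Nt * ℓ)))
    (ψk : Fin Nt → ℝ → EuclideanSpace ℂ (Fin (Nt * ℓ)))
    (hψ0 : ψ 0 = wI) (hψk0 : ∀ k, ψk k 0 = wI)
    (hψ : ∀ t ∈ Set.Icc (0 : ℝ) T,
      HasDerivAt ψ ((-Complex.I) • HD t (ψ t)) t)
    (hψk : ∀ k, ∀ t ∈ Set.Icc (0 : ℝ) T,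
      HasDerivAt (ψk k) ((-Complex.I) • (((E : ℂ) • P k + HD t) (ψk k t))) t) :
    ∑ k : Fin Nt, ‖ψk k T - ψ T‖ ^ 2 ≤ 2 * E * Real.sqrt Nt * T := by
  have hTmem : T ∈ Set.Icc (0:ℝ) T := ⟨le_of_lt hT, le_rfl⟩
  -- self-adjointness of the projections and perturbed Hamiltonians
  have hPsa : ∀ k, IsSelfAdjoint (P k) := fun k => by
    rw [hP k]; exact isSelfAdjoint_starProjection _
  have hstarE : star ((E:ℂ)) = (E:ℂ) := by
    simp [Complex.star_def, Complex.conj_ofReal]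
  have hHksa : ∀ k, ∀ t ∈ Set.Icc (0:ℝ) T, IsSelfAdjoint ((E:ℂ) • P k + HD t) :=
    fun k t ht => (IsSelfAdjoint.smul hstarE (hPsa k)).add
      (R := EuclideanSpace ℂ (Fin (Nt * ℓ)) →L[ℂ] EuclideanSpace ℂ (Fin (Nt * ℓ))) (hHDsa t ht)
  -- norm conservation
  have hnψ : ∀ t ∈ Set.Icc (0:ℝ) T, ‖ψ t‖ = 1 := fun t ht => by
    rw [norm_conserved_aux ψ HD hHDsa hψ ht, hψ0, hwI]
  have hnψk : ∀ k, ∀ t ∈ Set.Icc (0:ℝ) T, ‖ψk k t‖ = 1 := fun k t ht => by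
    rw [norm_conserved_aux (ψk k) (fun t => (E:ℂ) • P k + HD t) (hHksa k) (hψk k) ht,
      hψk0 k, hwI]
  -- Parseval for the blocks
  have hproj : ∀ k x, P k x = ∑ i : Fin ℓ, ⟪w (k, i), x⟫ • w (k, i) := fun k x => by
    rw [hP k]
    exact proj_formula _ (hw.comp (fun i : Fin ℓ => (k, i)) (fun a b hab => by
      simpa using congrArg Prod.snd hab)) _ (hL k) x
  have hPnormsq : ∀ k x, ‖P k x‖ ^ 2 = ∑ i : Fin ℓ, ‖⟪w (k, i), x⟫‖ ^ 2 := fun k x => by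
    rw [hproj k x]
    exact norm_sq_sum_smul _ (hw.comp (fun i : Fin ℓ => (k, i)) (fun a b hab => by
      simpa using congrArg Prod.snd hab)) _
  have hparseval : ∀ x : EuclideanSpace ℂ (Fin (Nt * ℓ)),
      ∑ k, ‖P k x‖ ^ 2 = ‖x‖ ^ 2 := by
    intro x
    set b : OrthonormalBasis (Fin Nt × Fin ℓ) ℂ (EuclideanSpace ℂ (Fin (Nt * ℓ))) :=
      OrthonormalBasis.mk hw (le_of_eq hspan.symm) with hb
    have hx : ‖x‖ ^ 2 = ∑ j : Fin Nt × Fin ℓ, ‖⟪w j, x⟫‖ ^ 2 := by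
      rw [← b.repr.norm_map x, EuclideanSpace.norm_eq,
        Real.sq_sqrt (Finset.sum_nonneg fun j _ => sq_nonneg _)]
      refine Finset.sum_congr rfl fun j _ => ?_
      rw [b.repr_apply_apply, OrthonormalBasis.coe_mk]
    rw [hx, Fintype.sum_prod_type]
    exact Finset.sum_congr rfl fun k _ => hPnormsq k x
  -- the correlation function and its derivative
  set g : ℝ → ℂ := fun u => ∑ k, ⟪ψk k u, ψ u⟫ with hg
  have hgd : ∀ t ∈ Set.Icc (0:ℝ) T, HasDerivWithinAt g
      (∑ k, (Complex.I * E) * ⟪P k (ψk k t), ψ t⟫) (Set.Icc (0:ℝ) T) t := by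
    intro t ht
    refine HasDerivWithinAt.fun_sum fun k _ => ?_
    have hd := HasDerivWithinAt.inner ℂ
      ((hψk k t ht).hasDerivWithinAt (s := Set.Icc (0:ℝ) T))
      ((hψ t ht).hasDerivWithinAt (s := Set.Icc (0:ℝ) T))
    convert hd using 1
    · rfl
    have hsym := (hHDsa t ht).isSymmetric.apply_clm (ψk k t) (ψ t)
    rw [inner_smul_right, inner_smul_left]
    simp only [ContinuousLinearMap.add_apply, ContinuousLinearMap.coe_smul',
      Pi.smul_apply, map_neg, Complex.conj_I]
    rw [inner_add_left, inner_smul_left, Complex.conj_ofReal, hsym]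
    ring
  -- bound the derivative
  have hbound : ∀ t ∈ Set.Icc (0:ℝ) T,
      ‖∑ k, (Complex.I * E) * ⟪P k (ψk k t), ψ t⟫‖ ≤ E * Real.sqrt Nt := by
    intro t ht
    have h1 : ∀ k, ‖(Complex.I * E) * ⟪P k (ψk k t), ψ t⟫‖ ≤ E * ‖P k (ψ t)‖ := by
      intro k
      have hsym := (hPsa k).isSymmetric.apply_clm (ψk k t) (ψ t)
      rw [norm_mul, norm_mul, Complex.norm_I, one_mul, Complex.norm_real,
        Real.norm_eq_abs, abs_of_pos hE, hsym]
      have := norm_inner_le_norm (𝕜 := ℂ) (ψk k t) (P k (ψ t))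
      rw [hnψk k t ht, one_mul] at this
      exact mul_le_mul_of_nonneg_left this (le_of_lt hE)
    calc ‖∑ k, (Complex.I * E) * ⟪P k (ψk k t), ψ t⟫‖
        ≤ ∑ k, ‖(Complex.I * E) * ⟪P k (ψk k t), ψ t⟫‖ := norm_sum_le _ _
      _ ≤ ∑ k, E * ‖P k (ψ t)‖ := Finset.sum_le_sum fun k _ => h1 k
      _ = E * ∑ k, ‖P k (ψ t)‖ := by rw [Finset.mul_sum]
      _ ≤ E * Real.sqrt Nt := by
          refine mul_le_mul_of_nonneg_left ?_ (le_of_lt hE)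
          have hsq : (∑ k, ‖P k (ψ t)‖) ^ 2 ≤ (Nt : ℝ) := by
            calc (∑ k, ‖P k (ψ t)‖) ^ 2
                ≤ (Finset.univ.card : ℝ) * ∑ k, ‖P k (ψ t)‖ ^ 2 :=
                  sq_sum_le_card_mul_sum_sq
              _ = (Nt : ℝ) * ‖ψ t‖ ^ 2 := by
                  rw [hparseval (ψ t)]; simp
              _ = (Nt : ℝ) := by rw [hnψ t ht]; ring
          have hs0 : (0:ℝ) ≤ ∑ k, ‖P k (ψ t)‖ :=
            Finset.sum_nonneg fun k _ => norm_nonneg _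
          nlinarith [Real.sq_sqrt (Nat.cast_nonneg (α := ℝ) Nt),
            Real.sqrt_nonneg (Nt : ℝ)]
  -- mean value inequality
  have hmvt := Convex.norm_image_sub_le_of_norm_hasDerivWithin_le hgd hbound
    (convex_Icc (0:ℝ) T) ⟨le_rfl, le_of_lt hT⟩ hTmem
  rw [sub_zero, Real.norm_eq_abs, abs_of_pos hT] at hmvt
  -- initial value of g
  have hg0 : g 0 = (Nt : ℂ) := by
    simp only [hg, hψ0, hψk0, inner_self_eq_norm_sq_to_K, hwI]
    simp
  -- final computation
  have hsum : ∑ k : Fin Nt, ‖ψk k T - ψ T‖ ^ 2 = 2 * (g 0 - g T).re := by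
    have hterm : ∀ k : Fin Nt, ‖ψk k T - ψ T‖ ^ 2 = 2 - 2 * (⟪ψk k T, ψ T⟫).re := by
      intro k
      rw [@norm_sub_sq ℂ, hnψ T hTmem, hnψk k T hTmem]
      simp only [RCLike.re_to_complex]
      ring
    rw [Finset.sum_congr rfl fun k _ => hterm k, hg0]
    simp only [hg, Finset.sum_sub_distrib, Finset.sum_const, Finset.card_univ,
      Fintype.card_fin, nsmul_eq_mul]
    rw [Complex.sub_re, Complex.re_sum]
    simp only [Complex.natCast_re]
    rw [mul_sub, Finset.mul_sum]
    ring
  rw [hsum]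
  have hre : (g 0 - g T).re ≤ ‖g T - g 0‖ := by
    calc (g 0 - g T).re ≤ ‖g 0 - g T‖ := Complex.re_le_norm _
      _ = ‖g T - g 0‖ := by rw [norm_sub_rev]
  calc 2 * (g 0 - g T).re ≤ 2 * (E * Real.sqrt Nt * T) := by
        have := hre.trans hmvt; linarith
    _ = 2 * E * Real.sqrt Nt * T := by ring
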